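/- The function ρ(λ) = min(λ, (5 - e^{-2λ})/2) is continuous and strictly increasing on [0,∞), but not differentiable at λ = ζ_c, the unique positive root of ζ = 5/2 - (1/2)e^{-2ζ}: the left derivative at ζ_c equals 1 while the right derivative equals e^{-2ζ_c} < 1. -/

import Mathlib

/-- ρ(λ) = min(λ, (5 - e^{-2λ})/2) is continuous and strictly increasing on [0,∞),
but not differentiable at ζ_c (the unique positive root of ζ = 5/2 - (1/2)e^{-2ζ}):
the left derivative at ζ_c is 1 and the right derivative is e^{-2ζ_c} < 1. -/
theorem bracelet_second_order_transition (ζc : ℝ)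
    (hζc : 0 < ζc ∧ ζc = 5/2 - (1/2) * Real.exp (-2 * ζc))
    (ρ : ℝ → ℝ) (hρ : ∀ lam : ℝ, ρ lam = min lam ((5 - Real.exp (-2 * lam)) / 2)) :
    ContinuousOn ρ (Set.Ici 0) ∧
    StrictMonoOn ρ (Set.Ici 0) ∧
    ¬ DifferentiableAt ℝ ρ ζc ∧
    HasDerivWithinAt ρ 1 (Set.Iic ζc) ζc ∧
    HasDerivWithinAt ρ (Real.exp (-2 * ζc)) (Set.Ici ζc) ζc ∧
    Real.exp (-2 * ζc) < 1 := by
  obtain ⟨hpos, heq⟩ := hζc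
  set g : ℝ → ℝ := fun x => (5 - Real.exp (-2 * x)) / 2 with hg
  have hρg : ρ = fun x => min x (g x) := funext fun x => hρ x
  have hgζ : g ζc = ζc := by simp only [hg]; linarith
  -- antitonicity of g x - x on [0,∞)
  have key : ∀ a b : ℝ, 0 ≤ a → a ≤ b → g b - b ≤ g a - a := by
    intro a b ha hab
    have e1 : Real.exp (-2 * a) ≤ 1 := Real.exp_le_one_iff.2 (by linarith)
    have e2 : -(2 * (b - a)) + 1 ≤ Real.exp (-(2 * (b - a))) :=
      Real.add_one_le_exp _
    have e3 : Real.exp (-2 * b) = Real.exp (-2 * a) * Real.exp (-(2 * (b - a))) := by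
      rw [← Real.exp_add]; ring_nf
    have e4 : 0 < Real.exp (-(2 * (b - a))) := Real.exp_pos _
    have e5 : 0 < Real.exp (-2 * a) := Real.exp_pos _
    simp only [hg]
    have e6 : Real.exp (-(2 * (b - a))) ≤ 1 := Real.exp_le_one_iff.2 (by linarith)
    nlinarith [mul_le_mul_of_nonneg_right e1 (by linarith : (0:ℝ) ≤ 1 - Real.exp (-(2 * (b - a))))]
  have hle : ∀ x : ℝ, 0 ≤ x → x ≤ ζc → x ≤ g x := by
    intro x hx hxc
    have := key x ζc hx hxc
    linarith [hgζ ▸ this]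
  have hge : ∀ x : ℝ, ζc ≤ x → g x ≤ x := by
    intro x hx
    have := key ζc x hpos.le hx
    linarith [hgζ ▸ this]
  have hgcont : Continuous g := by
    simp only [hg]; fun_prop
  have hgmono : StrictMono g := by
    intro x y hxy
    simp only [hg]
    have : Real.exp (-2 * y) < Real.exp (-2 * x) := Real.exp_lt_exp.2 (by linarith)
    linarith
  have hρζ : ρ ζc = ζc := by rw [hρ]; exact min_eq_left (le_of_eq hgζ.symm)
  have hE : Real.exp (-2 * ζc) < 1 := Real.exp_lt_one_iff.2 (by linarith)
  -- left derivative
  have hleft : HasDerivWithinAt ρ 1 (Set.Iic ζc) ζc := by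
    have hev : ρ =ᶠ[nhdsWithin ζc (Set.Iic ζc)] id := by
      filter_upwards [self_mem_nhdsWithin,
        eventually_nhdsWithin_of_eventually_nhds (eventually_gt_nhds hpos)] with x hx1 hx2
      rw [hρ x]
      exact min_eq_left (hle x hx2.le hx1)
    exact (hasDerivWithinAt_id ζc _).congr_of_eventuallyEq hev hρζ
  -- right derivative
  have hgderiv : HasDerivAt g (Real.exp (-2 * ζc)) ζc := by
    have h1 : HasDerivAt (fun x : ℝ => -2 * x) (-2) ζc := by
      simpa using (hasDerivAt_id ζc).const_mul (-2)
    have h2 : HasDerivAt (fun x : ℝ => Real.exp (-2 * x)) (Real.exp (-2 * ζc) * (-2)) ζc :=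
      h1.exp
    have h3 := ((hasDerivAt_const ζc (5 : ℝ)).sub h2).div_const 2
    exact h3.congr_deriv (by ring)
  have hright : HasDerivWithinAt ρ (Real.exp (-2 * ζc)) (Set.Ici ζc) ζc := by
    refine (hgderiv.hasDerivWithinAt).congr (fun x hx => ?_) (hρζ.trans hgζ.symm)
    rw [hρ x]
    exact min_eq_right (hge x hx)
  refine ⟨?_, ?_, ?_, hleft, hright, hE⟩
  · rw [hρg]
    exact (continuous_id.min hgcont).continuousOn
  · intro x hx y hy hxy
    rw [hρ x, hρ y]
    exact lt_min ((min_le_left _ _).trans_lt hxy) ((min_le_right _ _).trans_lt (hgmono hxy))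
  · intro hd
    have hu1 : UniqueDiffWithinAt ℝ (Set.Iic ζc) ζc := uniqueDiffOn_Iic ζc ζc Set.self_mem_Iic
    have hu2 : UniqueDiffWithinAt ℝ (Set.Ici ζc) ζc := uniqueDiffOn_Ici ζc ζc Set.self_mem_Ici
    have hd1 : HasDerivWithinAt ρ (deriv ρ ζc) (Set.Iic ζc) ζc :=
      hd.hasDerivAt.hasDerivWithinAt
    have hd2 : HasDerivWithinAt ρ (deriv ρ ζc) (Set.Ici ζc) ζc :=
      hd.hasDerivAt.hasDerivWithinAt
    have e1 : deriv ρ ζc = 1 := by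
      rw [← hd1.derivWithin hu1, hleft.derivWithin hu1]
    have e2 : deriv ρ ζc = Real.exp (-2 * ζc) := by
      rw [← hd2.derivWithin hu2, hright.derivWithin hu2]
    rw [e1] at e2
    linarith
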